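/- Let s be the real vector space of all real sequences (ξ_n)_{n≥0} and τ the shift operator τ(ξ_n) = (ξ_{n+1}). Let L ⊆ s be a τ-invariant linear subspace that does not contain the constant sequence ε = (1, 1, 1, …). Then L admits a summation: there exists a linear functional σ : L → ℝ such that σ[ξ] − σ[τξ] = ξ_0 for every ξ = (ξ_n) ∈ L. -/
import Mathlib


/-- a shift-invariant linear subspace `L` of the space of real sequences
that does not contain the constant sequence `(1, 1, 1, …)` admits a summation:
a linear functional `σ : L → ℝ` with `σ[ξ] − σ[τξ] = ξ_0` for all `ξ ∈ L`. -/
theorem shift_invariant_subspace_admits_summation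
    (L : Submodule ℝ (ℕ → ℝ))
    (hshift : ∀ ξ ∈ L, (fun n => ξ (n + 1)) ∈ L)
    (hε : (fun _ : ℕ => (1 : ℝ)) ∉ L) :
    ∃ σ : L →ₗ[ℝ] ℝ, ∀ ξ : L,
      σ ξ - σ ⟨fun n => (ξ : ℕ → ℝ) (n + 1), hshift ξ ξ.2⟩ = (ξ : ℕ → ℝ) 0 := by
  -- D ξ = ξ - τ ξ
  set D : L →ₗ[ℝ] L :=
    { toFun := fun ξ => ⟨fun n => (ξ : ℕ → ℝ) n - (ξ : ℕ → ℝ) (n + 1),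
        L.sub_mem ξ.2 (hshift ξ ξ.2)⟩
      map_add' := by intro x y; ext n; simp; ring
      map_smul' := by intro c x; ext n; simp; ring } with hD
  -- evaluation at 0
  set e₀ : L →ₗ[ℝ] ℝ := (LinearMap.proj 0).comp L.subtype with he₀
  have hker : LinearMap.ker D ≤ LinearMap.ker e₀ := by
    intro ξ hξ
    have h : ∀ n, (ξ : ℕ → ℝ) n - (ξ : ℕ → ℝ) (n + 1) = 0 := by
      intro n
      have := congrArg (fun v : L => (v : ℕ → ℝ) n) hξ
      simpa [hD] using this
    have hconst : ∀ n, (ξ : ℕ → ℝ) n = (ξ : ℕ → ℝ) 0 := by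
      intro n
      induction n with
      | zero => rfl
      | succ k ih => have := h k; linarith
    have h0 : (ξ : ℕ → ℝ) 0 = 0 := by
      by_contra h0
      apply hε
      have : (fun _ : ℕ => (1 : ℝ)) = ((ξ : ℕ → ℝ) 0)⁻¹ • (ξ : ℕ → ℝ) := by
        funext n
        simp [hconst n, inv_mul_cancel₀ h0]
      rw [this]
      exact L.smul_mem _ ξ.2
    simpa [he₀, LinearMap.mem_ker] using h0
  -- functional on the range of D
  set f : LinearMap.range D →ₗ[ℝ] ℝ :=
    ((LinearMap.ker D).liftQ e₀ hker).comp (D.quotKerEquivRange.symm.toLinearMap) with hf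
  obtain ⟨σ, hσ⟩ := f.exists_extend
  refine ⟨σ, fun ξ => ?_⟩
  have hsub : σ ξ - σ ⟨fun n => (ξ : ℕ → ℝ) (n + 1), hshift ξ ξ.2⟩ = σ (D ξ) := by
    rw [← map_sub]
    congr 1
  rw [hsub]
  have hmem : D ξ ∈ LinearMap.range D := ⟨ξ, rfl⟩
  have h1 : σ (D ξ) = f ⟨D ξ, hmem⟩ := by
    have := congrArg (fun g : LinearMap.range D →ₗ[ℝ] ℝ => g ⟨D ξ, hmem⟩) hσ
    simpa using this
  rw [h1, hf]
  have h2 : D.quotKerEquivRange.symm ⟨D ξ, hmem⟩ = Submodule.Quotient.mk ξ := by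
    rw [LinearEquiv.symm_apply_eq]
    rfl
  simp [h2]
  rfl
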